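/- Fix y ∈ ℝ, τ ∈ (0,1), m ∈ ℝ and ν > 0, and let w(η) = |τ − 1_{(y−η) ≤ 0}|, i.e. w(η) = τ if η < y and w(η) = 1 − τ if η ≥ y. Writing W = τ Φ(y; m, ν²) + (1 − τ)(1 − Φ(y; m, ν²)), the expectile regression loss satisfies ∫ (1/2)(y − η)² w(η) φ(η; m, ν²) dη = (1/2)[(y − m)² + ν²] W + (1/2)(2τ − 1)(y − m) ν² φ(y; m, ν²). -/

import Mathlib

open MeasureTheory Real Filter
open Topology

/-- Gaussian density with mean `m` and variance `ν ^ 2`, evaluated at `x`: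
`φ(x; m, ν²) = (2πν²)^{-1/2} exp(−(x−m)²/(2ν²))`. -/
noncomputable def gpdf (m ν x : ℝ) : ℝ :=
  (Real.sqrt (2 * Real.pi * ν ^ 2))⁻¹ * Real.exp (-((x - m) ^ 2) / (2 * ν ^ 2))

/-- Gaussian cumulative distribution function with mean `m` and variance `ν ^ 2`:
`Φ(c; m, ν²) = ∫_{−∞}^{c} φ(η; m, ν²) dη`. -/
noncomputable def gcdf (m ν c : ℝ) : ℝ := ∫ x in Set.Iio c, gpdf m ν x

section Aux

open Set

variable {m ν : ℝ}

lemma gpdf_eq (m ν : ℝ) :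
    gpdf m ν = ProbabilityTheory.gaussianPDFReal m ⟨ν ^ 2, sq_nonneg ν⟩ := by
  ext x
  simp [gpdf, ProbabilityTheory.gaussianPDFReal, neg_div]
  rfl

lemma continuous_gpdf : Continuous (gpdf m ν) := by
  unfold gpdf; fun_prop

lemma gpdf_nonneg (x : ℝ) : 0 ≤ gpdf m ν x :=
  mul_nonneg (inv_nonneg.2 (Real.sqrt_nonneg _)) (Real.exp_pos _).le

lemma integrable_gpdf (m ν : ℝ) : Integrable (gpdf m ν) := by
  rw [gpdf_eq]
  exact ProbabilityTheory.integrable_gaussianPDFReal m _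

lemma integral_gpdf (hν : 0 < ν) : ∫ x, gpdf m ν x = 1 := by
  rw [gpdf_eq]
  exact ProbabilityTheory.integral_gaussianPDFReal_eq_one m
    (by intro h; exact (pow_pos hν 2).ne' (congrArg Subtype.val h))

lemma hasDerivAt_gpdf (hν : 0 < ν) (x : ℝ) :
    HasDerivAt (gpdf m ν) (-(x - m) / ν ^ 2 * gpdf m ν x) x := by
  have hν2 : (ν : ℝ) ^ 2 ≠ 0 := (pow_pos hν 2).ne'
  have hinner : HasDerivAt (fun x : ℝ => -((x - m) ^ 2) / (2 * ν ^ 2))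
      (-(x - m) / ν ^ 2) x := by
    have h1 : HasDerivAt (fun x : ℝ => x - m) 1 x := (hasDerivAt_id x).sub_const m
    have h := ((h1.pow 2).neg).div_const (2 * ν ^ 2)
    refine h.congr_deriv ?_
    field_simp
    ring
  have h2 := (hinner.exp).const_mul ((Real.sqrt (2 * Real.pi * ν ^ 2))⁻¹)
  refine h2.congr_deriv ?_
  unfold gpdf
  ring

lemma hasDerivAt_gcdf (hν : 0 < ν) (x : ℝ) :
    HasDerivAt (gcdf m ν) (gpdf m ν x) x := by
  have hint : Integrable (gpdf m ν) := integrable_gpdf m ν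
  have key : ∀ c : ℝ, gcdf m ν c = gcdf m ν 0 + ∫ t in (0:ℝ)..c, gpdf m ν t := by
    intro c
    have h := intervalIntegral.integral_Iic_sub_Iic (hint.integrableOn (s := Iic 0))
      (hint.integrableOn (s := Iic c)) (f := gpdf m ν) (μ := volume)
    rw [integral_Iic_eq_integral_Iio, integral_Iic_eq_integral_Iio] at h
    rw [gcdf, gcdf, ← h]
    ring
  have hd : HasDerivAt (fun c => ∫ t in (0:ℝ)..c, gpdf m ν t) (gpdf m ν x) x :=
    intervalIntegral.integral_hasDerivAt_right hint.intervalIntegrable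
      (continuous_gpdf.stronglyMeasurableAtFilter _ _)
      continuous_gpdf.continuousAt
  have heq : gcdf m ν = fun c => gcdf m ν 0 + ∫ t in (0:ℝ)..c, gpdf m ν t := funext key
  rw [heq]
  exact hd.const_add _

lemma tendsto_abs_sub_atTop (m : ℝ) : Tendsto (fun x : ℝ => |x - m|) atTop atTop :=
  tendsto_abs_atTop_atTop.comp (tendsto_atTop_add_const_right _ (-m) tendsto_id)

lemma tendsto_abs_sub_atBot (m : ℝ) : Tendsto (fun x : ℝ => |x - m|) atBot atTop :=
  tendsto_abs_atBot_atTop.comp (tendsto_atBot_add_const_right _ (-m) tendsto_id)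

lemma tendsto_gpdf_of_abs (hν : 0 < ν) {l : Filter ℝ}
    (h : Tendsto (fun x : ℝ => |x - m|) l atTop) :
    Tendsto (gpdf m ν) l (𝓝 0) := by
  have h1 : Tendsto (fun x : ℝ => -((x - m) ^ 2) / (2 * ν ^ 2)) l atBot := by
    have hsq : Tendsto (fun x : ℝ => (x - m) ^ 2) l atTop := by
      have := (tendsto_pow_atTop (n := 2) (by norm_num)).comp h
      refine this.congr fun x => ?_
      simp [sq_abs]
    have := tendsto_neg_atTop_atBot.comp hsq
    exact Tendsto.atBot_div_const (by positivity) this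
  have h2 : Tendsto (gpdf m ν) l (𝓝 ((Real.sqrt (2 * Real.pi * ν ^ 2))⁻¹ * 0)) :=
    (Real.tendsto_exp_atBot.comp h1).const_mul _
  simpa using h2

lemma tendsto_id_mul_exp {b : ℝ} (hb : 0 < b) :
    Tendsto (fun u : ℝ => u * Real.exp (-b * u ^ 2)) atTop (𝓝 0) := by
  have h := (rpow_mul_exp_neg_mul_sq_isLittleO_exp_neg hb 1).trans_tendsto
    (Real.tendsto_exp_atBot.comp
      (Tendsto.const_mul_atTop_of_neg (by norm_num : (-(1/2) : ℝ) < 0) tendsto_id))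
  refine h.congr' ?_
  filter_upwards [eventually_gt_atTop (0:ℝ)] with u hu
  rw [Real.rpow_one]

lemma tendsto_sub_mul_gpdf_atTop (hν : 0 < ν) :
    Tendsto (fun x : ℝ => (x - m) * gpdf m ν x) atTop (𝓝 0) := by
  have hb : (0:ℝ) < (2 * ν ^ 2)⁻¹ := by positivity
  have h1 : Tendsto (fun u : ℝ => u * Real.exp (-(2 * ν ^ 2)⁻¹ * u ^ 2)) atTop (𝓝 0) :=
    tendsto_id_mul_exp hb
  have h2 : Tendsto (fun x : ℝ => (x - m) * Real.exp (-(2 * ν ^ 2)⁻¹ * (x - m) ^ 2))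
      atTop (𝓝 0) := h1.comp (tendsto_atTop_add_const_right _ (-m) tendsto_id)
  have h3 := h2.const_mul ((Real.sqrt (2 * Real.pi * ν ^ 2))⁻¹)
  rw [mul_zero] at h3
  refine h3.congr fun x => ?_
  unfold gpdf
  rw [neg_div, div_eq_inv_mul, ← neg_mul]
  ring

lemma tendsto_sub_mul_gpdf_atBot (hν : 0 < ν) :
    Tendsto (fun x : ℝ => (x - m) * gpdf m ν x) atBot (𝓝 0) := by
  have h := (tendsto_sub_mul_gpdf_atTop (m := -m) hν).comp tendsto_neg_atBot_atTop
  have h2 := h.neg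
  rw [neg_zero] at h2
  refine h2.congr fun x => ?_
  simp only [Function.comp_apply]
  have : gpdf (-m) ν (-x) = gpdf m ν x := by
    unfold gpdf
    ring_nf
  rw [this]
  ring

lemma tendsto_gcdf_atTop (hν : 0 < ν) : Tendsto (gcdf m ν) atTop (𝓝 1) := by
  have hint : Integrable (gpdf m ν) := integrable_gpdf m ν
  have hcov : AECover (volume : Measure ℝ) atTop (fun c : ℝ => Iio c) :=
    aecover_Iio tendsto_id
  have := hcov.integral_tendsto_of_countably_generated hint
  rwa [integral_gpdf hν] at this

lemma tendsto_gcdf_atBot (hν : 0 < ν) : Tendsto (gcdf m ν) atBot (𝓝 0) := by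
  have hint : Integrable (gpdf m ν) := integrable_gpdf m ν
  have hcov : AECover (volume : Measure ℝ) atBot (fun c : ℝ => Ici c) :=
    aecover_Ici tendsto_id
  have h := hcov.integral_tendsto_of_countably_generated hint
  rw [integral_gpdf hν] at h
  have hsplit : ∀ c : ℝ, gcdf m ν c = 1 - ∫ x in Ici c, gpdf m ν x := by
    intro c
    have := intervalIntegral.integral_Iio_add_Ici (b := c) (hint.integrableOn) (hint.integrableOn)
      (μ := volume) (f := gpdf m ν)
    rw [integral_gpdf hν] at this
    rw [gcdf, ← this]
    ring
  have : Tendsto (fun c : ℝ => 1 - ∫ x in Ici c, gpdf m ν x) atBot (𝓝 (1 - 1)) :=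
    (tendsto_const_nhds).sub h
  rw [sub_self] at this
  exact this.congr fun c => (hsplit c).symm

lemma integrable_sq_gpdf (hν : 0 < ν) (y : ℝ) :
    Integrable fun x : ℝ => (y - x) ^ 2 * gpdf m ν x := by
  have hb : (0:ℝ) < (2 * ν ^ 2)⁻¹ := by positivity
  set C := (Real.sqrt (2 * Real.pi * ν ^ 2))⁻¹ with hC
  have hC0 : 0 ≤ C := inv_nonneg.2 (Real.sqrt_nonneg _)
  have hsq : Integrable fun u : ℝ => u ^ 2 * Real.exp (-(2 * ν ^ 2)⁻¹ * u ^ 2) := by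
    have h := integrable_rpow_mul_exp_neg_mul_sq hb (by norm_num : (-1:ℝ) < 2)
    simpa only [Real.rpow_two] using h
  have hsq' : Integrable fun x : ℝ => (x - m) ^ 2 * Real.exp (-(2 * ν ^ 2)⁻¹ * (x - m) ^ 2) :=
    hsq.comp_sub_right m
  have hmaj : Integrable fun x : ℝ =>
      2 * (y - m) ^ 2 * gpdf m ν x
        + 2 * C * ((x - m) ^ 2 * Real.exp (-(2 * ν ^ 2)⁻¹ * (x - m) ^ 2)) :=
    ((integrable_gpdf m ν).const_mul _).add (hsq'.const_mul _)
  refine hmaj.mono' ?_ ?_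
  · exact (Continuous.mul (by fun_prop) continuous_gpdf).aestronglyMeasurable
  · refine Filter.Eventually.of_forall fun x => ?_
    have hg : gpdf m ν x = C * Real.exp (-(2 * ν ^ 2)⁻¹ * (x - m) ^ 2) := by
      unfold gpdf
      rw [neg_div, div_eq_inv_mul, ← neg_mul, hC]
    have hb1 : (y - x) ^ 2 ≤ 2 * (y - m) ^ 2 + 2 * (x - m) ^ 2 := by nlinarith [sq_nonneg ((y - m) + (x - m))]
    rw [Real.norm_eq_abs, abs_of_nonneg (mul_nonneg (sq_nonneg _) (gpdf_nonneg x))]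
    have hgn : 0 ≤ gpdf m ν x := gpdf_nonneg x
    calc (y - x) ^ 2 * gpdf m ν x
        ≤ (2 * (y - m) ^ 2 + 2 * (x - m) ^ 2) * gpdf m ν x := by
          exact mul_le_mul_of_nonneg_right hb1 hgn
      _ = 2 * (y - m) ^ 2 * gpdf m ν x
            + 2 * C * ((x - m) ^ 2 * Real.exp (-(2 * ν ^ 2)⁻¹ * (x - m) ^ 2)) := by
          rw [hg]; ring

lemma F_hasDerivAt (hν : 0 < ν) (y x : ℝ) :
    HasDerivAt (fun x : ℝ => ((y - m) ^ 2 + ν ^ 2) * gcdf m ν x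
        + ν ^ 2 * ((2 * y - m - x) * gpdf m ν x))
      ((y - x) ^ 2 * gpdf m ν x) x := by
  have hν2 : (ν : ℝ) ^ 2 ≠ 0 := (pow_pos hν 2).ne'
  have h1 := HasDerivAt.const_mul ((y - m) ^ 2 + ν ^ 2) (hasDerivAt_gcdf (m := m) hν x)
  have h2 : HasDerivAt (fun x : ℝ => 2 * y - m - x) (-1) x := by
    simpa using ((hasDerivAt_id x).const_sub (2 * y - m))
  have h3 := HasDerivAt.const_mul (ν ^ 2) (h2.mul (hasDerivAt_gpdf (m := m) hν x))
  have h := h1.add h3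
  refine h.congr_deriv ?_
  field_simp
  ring

lemma integral_Iio_sq_gpdf (hν : 0 < ν) (y : ℝ) :
    ∫ x in Iio y, (y - x) ^ 2 * gpdf m ν x
      = ((y - m) ^ 2 + ν ^ 2) * gcdf m ν y + ν ^ 2 * ((y - m) * gpdf m ν y) := by
  have hint := integrable_sq_gpdf (m := m) hν y
  have hbot : Tendsto (fun x : ℝ => ((y - m) ^ 2 + ν ^ 2) * gcdf m ν x
      + ν ^ 2 * ((2 * y - m - x) * gpdf m ν x)) atBot (𝓝 0) := by
    have hg := tendsto_gpdf_of_abs (m := m) hν (tendsto_abs_sub_atBot m)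
    have hxg := tendsto_sub_mul_gpdf_atBot (m := m) hν
    have h1 := (tendsto_gcdf_atBot (m := m) hν).const_mul ((y - m) ^ 2 + ν ^ 2)
    have h2 : Tendsto (fun x : ℝ => (2 * y - m - x) * gpdf m ν x) atBot (𝓝 0) := by
      have := ((hg.const_mul (2 * y - 2 * m)).sub hxg)
      simp only [mul_zero, sub_zero] at this
      refine this.congr fun x => ?_
      ring
    have := h1.add (h2.const_mul (ν ^ 2))
    simpa using this
  have key := integral_Iic_of_hasDerivAt_of_tendsto' (a := y) (f' := fun x => (y - x) ^ 2 * gpdf m ν x)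
    (fun x _ => F_hasDerivAt hν y x) hint.integrableOn hbot
  rw [integral_Iic_eq_integral_Iio] at key
  rw [key]
  ring

lemma integral_Ioi_sq_gpdf (hν : 0 < ν) (y : ℝ) :
    ∫ x in Ioi y, (y - x) ^ 2 * gpdf m ν x
      = ((y - m) ^ 2 + ν ^ 2)
        - (((y - m) ^ 2 + ν ^ 2) * gcdf m ν y + ν ^ 2 * ((y - m) * gpdf m ν y)) := by
  have hint := integrable_sq_gpdf (m := m) hν y
  have htop : Tendsto (fun x : ℝ => ((y - m) ^ 2 + ν ^ 2) * gcdf m ν x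
      + ν ^ 2 * ((2 * y - m - x) * gpdf m ν x)) atTop (𝓝 ((y - m) ^ 2 + ν ^ 2)) := by
    have hg := tendsto_gpdf_of_abs (m := m) hν (tendsto_abs_sub_atTop m)
    have hxg := tendsto_sub_mul_gpdf_atTop (m := m) hν
    have h1 := (tendsto_gcdf_atTop (m := m) hν).const_mul ((y - m) ^ 2 + ν ^ 2)
    have h2 : Tendsto (fun x : ℝ => (2 * y - m - x) * gpdf m ν x) atTop (𝓝 0) := by
      have := ((hg.const_mul (2 * y - 2 * m)).sub hxg)
      simp only [mul_zero, sub_zero] at this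
      refine this.congr fun x => ?_
      ring
    have := h1.add (h2.const_mul (ν ^ 2))
    simpa using this
  have key := integral_Ioi_of_hasDerivAt_of_tendsto' (a := y) (f' := fun x => (y - x) ^ 2 * gpdf m ν x)
    (fun x _ => F_hasDerivAt hν y x) hint.integrableOn htop
  rw [key]
  ring

end Aux

theorem expectile_Psi0 (y τ m ν : ℝ) (hτ : τ ∈ Set.Ioo (0 : ℝ) 1) (hν : 0 < ν) :
    ∫ η, (1 / 2) * (y - η) ^ 2 * (if η < y then τ else 1 - τ) * gpdf m ν η
      = (1 / 2) * ((y - m) ^ 2 + ν ^ 2)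
          * (τ * gcdf m ν y + (1 - τ) * (1 - gcdf m ν y))
        + (1 / 2) * (2 * τ - 1) * (y - m) * ν ^ 2 * gpdf m ν y := by
  obtain ⟨hτ0, hτ1⟩ := hτ
  set f₀ : ℝ → ℝ := fun η => (1 / 2) * (y - η) ^ 2 * (if η < y then τ else 1 - τ) * gpdf m ν η
    with hf₀
  have hint := integrable_sq_gpdf (m := m) hν y
  have hmeas : AEStronglyMeasurable f₀ volume := by
    apply Measurable.aestronglyMeasurable
    apply Measurable.mul ?_ continuous_gpdf.measurable
    apply Measurable.mul (by fun_prop)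
    exact Measurable.ite measurableSet_Iio measurable_const measurable_const
  have hbound : ∀ η : ℝ, ‖f₀ η‖ ≤ (1 / 2) * ((y - η) ^ 2 * gpdf m ν η) := by
    intro η
    have hg := gpdf_nonneg (m := m) (ν := ν) η
    have hc0 : 0 ≤ (if η < y then τ else 1 - τ) := by
      split <;> linarith
    have hc1 : (if η < y then τ else 1 - τ) ≤ 1 := by
      split <;> linarith
    rw [hf₀, Real.norm_eq_abs, abs_of_nonneg (by positivity)]
    calc (1 / 2) * (y - η) ^ 2 * (if η < y then τ else 1 - τ) * gpdf m ν η
        ≤ (1 / 2) * (y - η) ^ 2 * 1 * gpdf m ν η := by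
          apply mul_le_mul_of_nonneg_right _ hg
          apply mul_le_mul_of_nonneg_left hc1 (by positivity)
      _ = (1 / 2) * ((y - η) ^ 2 * gpdf m ν η) := by ring
  have hf₀int : Integrable f₀ :=
    (hint.const_mul (1 / 2)).mono' hmeas (Filter.Eventually.of_forall hbound)
  have hsplit := intervalIntegral.integral_Iio_add_Ici (b := y) hf₀int.integrableOn hf₀int.integrableOn
  rw [← hsplit]
  have hIio : ∫ η in Set.Iio y, f₀ η
      = (τ / 2) * ∫ x in Set.Iio y, (y - x) ^ 2 * gpdf m ν x := by
    rw [← integral_const_mul]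
    apply setIntegral_congr_fun measurableSet_Iio
    intro η hη
    have hlt : η < y := hη
    simp only [hf₀]
    rw [if_pos hlt]
    ring
  have hIci : ∫ η in Set.Ici y, f₀ η
      = ((1 - τ) / 2) * ∫ x in Set.Ioi y, (y - x) ^ 2 * gpdf m ν x := by
    rw [← integral_const_mul, integral_Ici_eq_integral_Ioi]
    apply setIntegral_congr_fun measurableSet_Ioi
    intro η hη
    have hlt : y < η := hη
    simp only [hf₀]
    rw [if_neg (not_lt.2 hlt.le)]
    ring
  rw [hIio, hIci, integral_Iio_sq_gpdf hν y, integral_Ioi_sq_gpdf hν y]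
  ring
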